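/- Let ρ_D and ρ_I be positive semidefinite complex n × n matrices with ρ_D ⪯ ρ_I, let τ be a positive semidefinite n × n matrix with trace 1, and let λ ∈ (0, 1]. Define the depolarizing channel Δ_λ(ρ) = (1−λ)ρ + λ·I/n. Then −Tr(τ · log Δ_λ(ρ_I)) ≤ −Tr(τ · log Δ_λ(ρ_D)), where log denotes the matrix logarithm obtained by applying the real logarithm to the eigenvalues in a spectral decomposition of the (positive definite) Hermitian argument. -/

import Mathlib

open Matrix ComplexOrder

section Aux

variable {n : Type*} [Fintype n] [DecidableEq n]

lemma aux_smul_posSemidef {r : ℝ} (hr : 0 ≤ r) {A : Matrix n n ℂ} (hA : A.PosSemidef) :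
    ((r : ℂ) • A).PosSemidef :=
  hA.smul (Complex.zero_le_real.mpr hr)

lemma aux_smul_one_posDef {r : ℝ} (hr : 0 < r) :
    (((r : ℂ)) • (1 : Matrix n n ℂ)).PosDef :=
  Matrix.PosDef.one.smul (by exact_mod_cast hr)

lemma aux_diag_re_nonneg {M : Matrix n n ℂ} (hM : M.PosSemidef) (i : n) :
    0 ≤ (M i i).re := by
  have h := hM.re_dotProduct_nonneg (Pi.single i 1)
  simpa [dotProduct, Pi.single_apply, apply_ite] using h

lemma aux_trace_conj_diag (τ V : Matrix n n ℂ) (g : n → ℝ) :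
    ((τ * (V * Matrix.diagonal (fun i => (g i : ℂ)) * star V)).trace).re
    = ∑ i, ((star V * τ * V) i i).re * g i := by
  rw [show τ * (V * Matrix.diagonal (fun i => (g i : ℂ)) * star V)
      = τ * (V * Matrix.diagonal (fun i => (g i : ℂ))) * star V by
    simp only [mul_assoc]]
  rw [Matrix.trace_mul_cycle, ← mul_assoc, mul_assoc (star V * τ)]
  rw [show star V * τ * (V * Matrix.diagonal (fun i => (g i : ℂ)))
      = (star V * τ * V) * Matrix.diagonal (fun i => (g i : ℂ)) by simp only [mul_assoc]]
  rw [Matrix.trace]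
  rw [Complex.re_sum]
  refine Finset.sum_congr rfl fun i _ => ?_
  simp [Matrix.diag, Matrix.mul_diagonal, Complex.mul_re]

lemma aux_trace_conj_unitary (τ V : Matrix n n ℂ) (hV : V * star V = 1) :
    (star V * τ * V).trace = τ.trace := by
  rw [Matrix.trace_mul_cycle, hV, one_mul]

lemma aux_eigU_mul_star {H : Matrix n n ℂ} (hH : H.IsHermitian) :
    (hH.eigenvectorUnitary : Matrix n n ℂ) * star (hH.eigenvectorUnitary : Matrix n n ℂ) = 1 :=
  Matrix.mem_unitaryGroup_iff.mp hH.eigenvectorUnitary.2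

lemma aux_star_mul_eigU {H : Matrix n n ℂ} (hH : H.IsHermitian) :
    star (hH.eigenvectorUnitary : Matrix n n ℂ) * (hH.eigenvectorUnitary : Matrix n n ℂ) = 1 :=
  Matrix.mem_unitaryGroup_iff'.mp hH.eigenvectorUnitary.2

lemma aux_conj_diag_mul {V : Matrix n n ℂ} (hV : star V * V = 1) (f g : n → ℂ) :
    (V * Matrix.diagonal f * star V) * (V * Matrix.diagonal g * star V)
      = V * Matrix.diagonal (fun i => f i * g i) * star V := by
  have h : Matrix.diagonal f * (star V * V) * Matrix.diagonal g
      = Matrix.diagonal fun i => f i * g i := by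
    rw [hV, mul_one, Matrix.diagonal_mul_diagonal]
  calc (V * Matrix.diagonal f * star V) * (V * Matrix.diagonal g * star V)
      = V * (Matrix.diagonal f * (star V * V) * Matrix.diagonal g) * star V := by
        simp only [Matrix.mul_assoc]
    _ = V * Matrix.diagonal (fun i => f i * g i) * star V := by rw [h]

lemma aux_shifted_spectral {H : Matrix n n ℂ} (hH : H.IsHermitian) (t : ℝ) :
    H + (t : ℂ) • (1 : Matrix n n ℂ)
      = (hH.eigenvectorUnitary : Matrix n n ℂ) *
        Matrix.diagonal (fun i => ((hH.eigenvalues i + t : ℝ) : ℂ)) *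
        star (hH.eigenvectorUnitary : Matrix n n ℂ) := by
  have h1 : (t : ℂ) • (1 : Matrix n n ℂ)
      = (hH.eigenvectorUnitary : Matrix n n ℂ) * Matrix.diagonal (fun _ => (t : ℂ)) *
        star (hH.eigenvectorUnitary : Matrix n n ℂ) := by
    have h0 : Matrix.diagonal (fun _ : n => (t : ℂ)) = (t : ℂ) • (1 : Matrix n n ℂ) := by
      ext i j
      by_cases hij : i = j <;>
        simp [Matrix.diagonal_apply, Matrix.one_apply, hij]
    rw [h0, Matrix.mul_smul, Matrix.smul_mul, mul_one, aux_eigU_mul_star hH]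
  have hdiag : Matrix.diagonal (fun i => ((hH.eigenvalues i + t : ℝ) : ℂ))
      = Matrix.diagonal (RCLike.ofReal ∘ hH.eigenvalues)
        + Matrix.diagonal (fun _ : n => (t : ℂ)) := by
    ext i j
    rcases eq_or_ne i j with rfl | hij
    · simp only [Matrix.diagonal_apply_eq, Matrix.add_apply, Function.comp_apply,
        show (RCLike.ofReal : ℝ → ℂ) = Complex.ofReal from rfl]
      push_cast
      ring
    · simp [Matrix.diagonal_apply_ne _ hij]
  have hs := hH.spectral_theorem; rw [Unitary.conjStarAlgAut_apply] at hs
  rw [hdiag, Matrix.mul_add, Matrix.add_mul, ← h1, ← hs]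

lemma aux_shifted_inv_spectral {H : Matrix n n ℂ} (hH : H.IsHermitian) (t : ℝ)
    (h : ∀ i, hH.eigenvalues i + t ≠ 0) :
    (H + (t : ℂ) • (1 : Matrix n n ℂ))⁻¹
      = (hH.eigenvectorUnitary : Matrix n n ℂ) *
        Matrix.diagonal (fun i => (((hH.eigenvalues i + t)⁻¹ : ℝ) : ℂ)) *
        star (hH.eigenvectorUnitary : Matrix n n ℂ) := by
  apply Matrix.inv_eq_right_inv
  rw [aux_shifted_spectral hH t, aux_conj_diag_mul (aux_star_mul_eigU hH)]
  have : (fun i => ((hH.eigenvalues i + t : ℝ) : ℂ) * (((hH.eigenvalues i + t)⁻¹ : ℝ) : ℂ))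
      = fun _ => (1 : ℂ) := by
    funext i
    rw [← Complex.ofReal_mul, mul_inv_cancel₀ (h i), Complex.ofReal_one]
  rw [this, Matrix.diagonal_one, mul_one, aux_eigU_mul_star hH]

lemma aux_inv_spectral {H : Matrix n n ℂ} (hH : H.IsHermitian)
    (h : ∀ i, hH.eigenvalues i ≠ 0) :
    H⁻¹ = (hH.eigenvectorUnitary : Matrix n n ℂ) *
        Matrix.diagonal (fun i => (((hH.eigenvalues i)⁻¹ : ℝ) : ℂ)) *
        star (hH.eigenvectorUnitary : Matrix n n ℂ) := by
  apply Matrix.inv_eq_right_inv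
  have h2 : H * ((hH.eigenvectorUnitary : Matrix n n ℂ) *
        Matrix.diagonal (fun i => (((hH.eigenvalues i)⁻¹ : ℝ) : ℂ)) *
        star (hH.eigenvectorUnitary : Matrix n n ℂ))
      = ((hH.eigenvectorUnitary : Matrix n n ℂ) *
        Matrix.diagonal (RCLike.ofReal ∘ hH.eigenvalues) *
        star (hH.eigenvectorUnitary : Matrix n n ℂ)) *
        ((hH.eigenvectorUnitary : Matrix n n ℂ) *
        Matrix.diagonal (fun i => (((hH.eigenvalues i)⁻¹ : ℝ) : ℂ)) *
        star (hH.eigenvectorUnitary : Matrix n n ℂ)) := by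
    have hs := hH.spectral_theorem; rw [Unitary.conjStarAlgAut_apply] at hs
    rw [← hs]
  rw [h2, aux_conj_diag_mul (aux_star_mul_eigU hH)]
  have : (fun i => ((RCLike.ofReal ∘ hH.eigenvalues) i : ℂ) * (((hH.eigenvalues i)⁻¹ : ℝ) : ℂ))
      = fun _ => (1 : ℂ) := by
    funext i
    simp only [Function.comp_apply]
    show ((hH.eigenvalues i : ℝ) : ℂ) * (((hH.eigenvalues i)⁻¹ : ℝ) : ℂ) = 1
    rw [← Complex.ofReal_mul, mul_inv_cancel₀ (h i), Complex.ofReal_one]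
  rw [this, Matrix.diagonal_one, mul_one, aux_eigU_mul_star hH]

lemma aux_eigenvalues_ge_one {C : Matrix n n ℂ} (hC : C.IsHermitian)
    (h1 : (C - 1).PosSemidef) (i : n) : 1 ≤ hC.eigenvalues i := by
  have hv := hC.eigenvalues_eq i
  set v : n → ℂ := ⇑(hC.eigenvectorBasis i) with hvdef
  have hsub : star v ⬝ᵥ (C *ᵥ v) = star v ⬝ᵥ ((C - 1) *ᵥ v) + star v ⬝ᵥ v := by
    rw [Matrix.sub_mulVec, dotProduct_sub, Matrix.one_mulVec]
    ring
  have hnorm : RCLike.re (star v ⬝ᵥ v) = 1 := by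
    have hinner : (inner ℂ (hC.eigenvectorBasis i) (hC.eigenvectorBasis i) : ℂ)
        = star v ⬝ᵥ v := by
      exact (EuclideanSpace.inner_eq_star_dotProduct _ _).trans (dotProduct_comm _ _)
    have hn : ‖hC.eigenvectorBasis i‖ = 1 := hC.eigenvectorBasis.orthonormal.1 i
    have := inner_self_eq_norm_sq_to_K (𝕜 := ℂ) (hC.eigenvectorBasis i)
    rw [hinner] at this
    rw [this, hn]
    norm_num
  have hpos := h1.re_dotProduct_nonneg v
  rw [hv, hsub, map_add, hnorm]
  linarith

lemma aux_one_sub_inv_posSemidef {C : Matrix n n ℂ} (hC : C.IsHermitian)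
    (h1 : (C - 1).PosSemidef) : ((1 : Matrix n n ℂ) - C⁻¹).PosSemidef := by
  have hge := aux_eigenvalues_ge_one hC h1
  have hne : ∀ i, hC.eigenvalues i ≠ 0 := fun i => by have := hge i; positivity
  set V := (hC.eigenvectorUnitary : Matrix n n ℂ) with hVdef
  have hone : (1 : Matrix n n ℂ) = V * Matrix.diagonal (fun _ => (1 : ℂ)) * star V := by
    rw [Matrix.diagonal_one, mul_one, aux_eigU_mul_star hC]
  have hinv := aux_inv_spectral hC hne
  have key : (1 : Matrix n n ℂ) - C⁻¹
      = V * Matrix.diagonal (fun i => ((1 - (hC.eigenvalues i)⁻¹ : ℝ) : ℂ)) * star V := by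
    rw [hinv]
    conv_lhs => rw [hone]
    rw [← Matrix.sub_mul, ← Matrix.mul_sub, Matrix.diagonal_sub]
    congr 2
    funext i
    push_cast
    ring
  rw [key]
  have hdiag : (Matrix.diagonal (fun i => ((1 - (hC.eigenvalues i)⁻¹ : ℝ) : ℂ))).PosSemidef := by
    refine Matrix.PosSemidef.diagonal fun i => ?_
    simp only [Pi.zero_apply]
    rw [Complex.zero_le_real]
    have h0 : 0 < hC.eigenvalues i := lt_of_lt_of_le one_pos (hge i)
    have : (hC.eigenvalues i)⁻¹ ≤ 1 := by
      rw [inv_le_one_iff₀]; right; exact hge i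
    linarith
  have := hdiag.mul_mul_conjTranspose_same V
  rwa [← Matrix.star_eq_conjTranspose] at this

open scoped MatrixOrder in
lemma aux_inv_sub_inv_posSemidef {A B : Matrix n n ℂ} (hA : A.PosDef) (hB : B.PosDef)
    (hle : (B - A).PosSemidef) : (A⁻¹ - B⁻¹).PosSemidef := by
  set S := CFC.sqrt A with hSdef
  have hS : S.PosSemidef := (CFC.sqrt_nonneg A).posSemidef
  have hSS : S * S = A := CFC.sqrt_mul_sqrt_self A hA.posSemidef.nonneg
  have hdetA : IsUnit A.det := isUnit_iff_ne_zero.mpr hA.det_pos.ne'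
  have hdetS : IsUnit S.det := by
    have hsq : S.det * S.det = A.det := by rw [← Matrix.det_mul, hSS]
    refine isUnit_iff_ne_zero.mpr fun h0 => ?_
    rw [h0, mul_zero] at hsq
    exact hA.det_pos.ne' hsq.symm
  have hdetB : IsUnit B.det := isUnit_iff_ne_zero.mpr hB.det_pos.ne'
  have hS1 : S⁻¹ * S = 1 := Matrix.nonsing_inv_mul S hdetS
  have hS2 : S * S⁻¹ = 1 := Matrix.mul_nonsing_inv S hdetS
  have hB2 : B * B⁻¹ = 1 := Matrix.mul_nonsing_inv B hdetB
  have hSH : (S⁻¹)ᴴ = S⁻¹ := by rw [Matrix.conjTranspose_nonsing_inv, hS.isHermitian.eq]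
  set C := S⁻¹ * B * S⁻¹ with hCdef
  have hCherm : C.IsHermitian := by
    unfold C
    rw [Matrix.IsHermitian, Matrix.conjTranspose_mul, Matrix.conjTranspose_mul, hSH,
      hB.isHermitian.eq, Matrix.mul_assoc]
  have hC1 : (C - 1).PosSemidef := by
    have hAconj : S⁻¹ * A * S⁻¹ = 1 := by
      rw [← hSS, ← Matrix.mul_assoc, Matrix.mul_assoc (S⁻¹ * S), hS1, one_mul, hS2]
    have heq : C - 1 = S⁻¹ * (B - A) * S⁻¹ := by
      have : S⁻¹ * (B - A) * S⁻¹ = C - 1 := by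
        rw [Matrix.mul_sub, Matrix.sub_mul, hAconj]
      exact this.symm
    rw [heq]
    have := hle.conjTranspose_mul_mul_same (S⁻¹)
    rwa [hSH] at this
  have hone := aux_one_sub_inv_posSemidef hCherm hC1
  have hCinv : C⁻¹ = S * B⁻¹ * S := by
    apply Matrix.inv_eq_right_inv
    unfold C
    calc S⁻¹ * B * S⁻¹ * (S * B⁻¹ * S)
        = S⁻¹ * (B * ((S⁻¹ * S) * (B⁻¹ * S))) := by simp only [Matrix.mul_assoc]
      _ = S⁻¹ * (B * (B⁻¹ * S)) := by rw [hS1, one_mul]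
      _ = S⁻¹ * ((B * B⁻¹) * S) := by simp only [Matrix.mul_assoc]
      _ = 1 := by rw [hB2, one_mul, hS1]
  have hfinal : A⁻¹ - B⁻¹ = S⁻¹ * ((1 : Matrix n n ℂ) - C⁻¹) * S⁻¹ := by
    rw [Matrix.mul_sub, Matrix.sub_mul, mul_one, hCinv]
    congr 1
    · rw [← hSS, Matrix.mul_inv_rev]
    · exact (calc S⁻¹ * (S * B⁻¹ * S) * S⁻¹
          = S⁻¹ * (S * (B⁻¹ * (S * S⁻¹))) := by simp only [Matrix.mul_assoc]
        _ = S⁻¹ * (S * B⁻¹) := by rw [hS2, mul_one]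
        _ = (S⁻¹ * S) * B⁻¹ := by rw [Matrix.mul_assoc]
        _ = B⁻¹ := by rw [hS1, one_mul]).symm
  rw [hfinal]
  have := hone.conjTranspose_mul_mul_same (S⁻¹)
  rwa [hSH] at this

lemma aux_trace_re_nonneg {M : Matrix n n ℂ} (hM : M.PosSemidef) : 0 ≤ (M.trace).re := by
  rw [Matrix.trace, Complex.re_sum]
  exact Finset.sum_nonneg fun i _ => aux_diag_re_nonneg hM i

open scoped MatrixOrder in
lemma aux_trace_mul_posSemidef_nonneg {τ M : Matrix n n ℂ} (hτ : τ.PosSemidef)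
    (hM : M.PosSemidef) : 0 ≤ ((τ * M).trace).re := by
  set R := CFC.sqrt τ with hRdef
  have hR : R.PosSemidef := (CFC.sqrt_nonneg τ).posSemidef
  have hRR : R * R = τ := CFC.sqrt_mul_sqrt_self τ hτ.nonneg
  have h1 : (τ * M).trace = (R * M * R).trace := by
    rw [← hRR, Matrix.mul_assoc, Matrix.trace_mul_comm]
  rw [h1]
  have := hM.conjTranspose_mul_mul_same R
  rw [hR.isHermitian.eq] at this
  exact aux_trace_re_nonneg this

open Filter in
lemma aux_log_shift_tendsto (a : ℝ) (ha : 0 < a) :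
    Tendsto (fun t => Real.log (t + a) - Real.log t) atTop (nhds 0) := by
  have hdiv : Tendsto (fun t : ℝ => a / t) atTop (nhds 0) :=
    Tendsto.div_atTop tendsto_const_nhds tendsto_id
  have h1 : Tendsto (fun t : ℝ => (t + a) / t) atTop (nhds 1) := by
    have h2 : Tendsto (fun t : ℝ => 1 + a / t) atTop (nhds 1) := by
      simpa using tendsto_const_nhds.add hdiv
    refine h2.congr' ?_
    filter_upwards [eventually_gt_atTop (0 : ℝ)] with t ht
    field_simp
  have h3 : Tendsto (fun t : ℝ => Real.log ((t + a) / t)) atTop (nhds 0) := by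
    have := ((Real.continuousAt_log one_ne_zero).tendsto).comp h1
    simpa [Function.comp_def] using this
  refine h3.congr' ?_
  filter_upwards [eventually_gt_atTop (0 : ℝ)] with t ht
  rw [Real.log_div (by positivity) ht.ne']

open Filter in
lemma aux_key_analysis {ι κ : Type*} [Fintype ι] [Fintype κ]
    (c : ι → ℝ) (d : κ → ℝ) (μ : ι → ℝ) (ν : κ → ℝ)
    (hμ : ∀ i, 0 < μ i) (hν : ∀ j, 0 < ν j)
    (hsum : ∑ i, c i = ∑ j, d j)
    (hder : ∀ t : ℝ, 0 ≤ t → (∑ j, d j * (t + ν j)⁻¹) ≤ ∑ i, c i * (t + μ i)⁻¹) :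
    ∑ i, c i * Real.log (μ i) ≤ ∑ j, d j * Real.log (ν j) := by
  set F : ℝ → ℝ := fun t =>
    (∑ i, c i * Real.log (t + μ i)) - ∑ j, d j * Real.log (t + ν j) with hFdef
  have hF' : ∀ t : ℝ, 0 ≤ t → HasDerivAt F
      ((∑ i, c i * (t + μ i)⁻¹) - ∑ j, d j * (t + ν j)⁻¹) t := by
    intro t ht
    have h1 : ∀ (a : ℝ), 0 < a →
        HasDerivAt (fun s : ℝ => Real.log (s + a)) ((t + a)⁻¹) t := by
      intro a ha
      have h := Real.hasDerivAt_log (x := t + a) (by positivity)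
      have h2 : HasDerivAt (fun s : ℝ => s + a) 1 t := (hasDerivAt_id t).add_const a
      simpa [Function.comp_def] using h.comp t h2
    refine HasDerivAt.sub ?_ ?_
    · exact HasDerivAt.fun_sum fun i _ => (h1 (μ i) (hμ i)).const_mul (c i)
    · exact HasDerivAt.fun_sum fun j _ => (h1 (ν j) (hν j)).const_mul (d j)
  have hmono : MonotoneOn F (Set.Ici (0 : ℝ)) := by
    refine monotoneOn_of_deriv_nonneg (convex_Ici 0)
      (fun t ht => (hF' t ht).continuousAt.continuousWithinAt) ?_ ?_
    · intro t ht
      rw [interior_Ici] at ht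
      exact ((hF' t ht.le).differentiableAt).differentiableWithinAt
    · intro t ht
      rw [interior_Ici] at ht
      rw [(hF' t ht.le).deriv]
      exact sub_nonneg.mpr (hder t ht.le)
  have htend : Tendsto F atTop (nhds 0) := by
    have hG : Tendsto (fun t => (∑ i, c i * (Real.log (t + μ i) - Real.log t))
        - ∑ j, d j * (Real.log (t + ν j) - Real.log t)) atTop (nhds 0) := by
      have hs1 : Tendsto (fun t => ∑ i, c i * (Real.log (t + μ i) - Real.log t))
          atTop (nhds 0) := by
        have := tendsto_finset_sum (Finset.univ : Finset ι)
          (fun i _ => (aux_log_shift_tendsto (μ i) (hμ i)).const_mul (c i))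
        simpa using this
      have hs2 : Tendsto (fun t => ∑ j, d j * (Real.log (t + ν j) - Real.log t))
          atTop (nhds 0) := by
        have := tendsto_finset_sum (Finset.univ : Finset κ)
          (fun j _ => (aux_log_shift_tendsto (ν j) (hν j)).const_mul (d j))
        simpa using this
      simpa using hs1.sub hs2
    refine hG.congr fun t => ?_
    simp only [hFdef, mul_sub, Finset.sum_sub_distrib, ← Finset.sum_mul, hsum]
    ring
  have hle0 : F 0 ≤ 0 := by
    refine ge_of_tendsto htend ?_
    filter_upwards [eventually_ge_atTop (0 : ℝ)] with t ht
    exact hmono Set.self_mem_Ici ht ht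
  have hF0 : F 0 = (∑ i, c i * Real.log (μ i)) - ∑ j, d j * Real.log (ν j) := by
    simp [hFdef]
  linarith [hF0 ▸ hle0]

end Aux

/-- Matrix logarithm of a Hermitian matrix, obtained by applying the real logarithm to the
eigenvalues in a spectral decomposition (and `0` on non-Hermitian input). -/
noncomputable def matLog {n : Type*} [Fintype n] [DecidableEq n]
    (H : Matrix n n ℂ) : Matrix n n ℂ :=
  if hH : H.IsHermitian then
    (hH.eigenvectorUnitary : Matrix n n ℂ) *
      Matrix.diagonal (fun i => (Real.log (hH.eigenvalues i) : ℂ)) *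
      star (hH.eigenvectorUnitary : Matrix n n ℂ)
  else 0

/-- The depolarizing channel `Δ_λ(ρ) = (1 - λ) ρ + λ I / n` on `n × n` complex matrices. -/
noncomputable def depol {n : Type*} [Fintype n] [DecidableEq n]
    (l : ℝ) (ρ : Matrix n n ℂ) : Matrix n n ℂ :=
  ((1 - l : ℝ) : ℂ) • ρ + ((l / (Fintype.card n) : ℝ) : ℂ) • (1 : Matrix n n ℂ)

lemma depol_posDef {n : Type*} [Fintype n] [DecidableEq n] (hn : 0 < Fintype.card n)
    {l : ℝ} (hl0 : 0 < l) (hl1 : l ≤ 1) {ρ : Matrix n n ℂ} (hρ : ρ.PosSemidef) :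
    (depol l ρ).PosDef := by
  rw [depol]
  exact Matrix.PosDef.posSemidef_add (aux_smul_posSemidef (by linarith) hρ)
    (aux_smul_one_posDef (by positivity))

/-- If `ρ_D ⪯ ρ_I` are positive semidefinite, `τ` is a state (psd, trace one), and
`λ ∈ (0,1]`, then `-Tr(τ log Δ_λ(ρ_I)) ≤ -Tr(τ log Δ_λ(ρ_D))`. -/
theorem crossEntropy_anti_of_loewner_le
    {n : ℕ} (hn : 0 < n)
    (ρD ρI τ : Matrix (Fin n) (Fin n) ℂ)
    (hρD : ρD.PosSemidef) (hρI : ρI.PosSemidef)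
    (hle : (ρI - ρD).PosSemidef)
    (hτ : τ.PosSemidef) (hτtr : τ.trace = 1)
    (l : ℝ) (hl0 : 0 < l) (hl1 : l ≤ 1) :
    -(τ * matLog (depol l ρI)).trace.re ≤ -(τ * matLog (depol l ρD)).trace.re := by
  have hcard : 0 < Fintype.card (Fin n) := by simpa using hn
  set A := depol l ρD with hAdef
  set B := depol l ρI with hBdef
  have hA : A.PosDef := depol_posDef hcard hl0 hl1 hρD
  have hB : B.PosDef := depol_posDef hcard hl0 hl1 hρI
  have hBA : (B - A).PosSemidef := by
    have heq : B - A = ((1 - l : ℝ) : ℂ) • (ρI - ρD) := by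
      rw [hAdef, hBdef, depol, depol, smul_sub]
      abel
    rw [heq]
    exact aux_smul_posSemidef (by linarith) hle
  have hAH : A.IsHermitian := hA.isHermitian
  have hBH : B.IsHermitian := hB.isHermitian
  set V := (hAH.eigenvectorUnitary : Matrix (Fin n) (Fin n) ℂ) with hVdef
  set W := (hBH.eigenvectorUnitary : Matrix (Fin n) (Fin n) ℂ) with hWdef
  set μ := hAH.eigenvalues with hμdef
  set ν := hBH.eigenvalues with hνdef
  have hμpos : ∀ i, 0 < μ i := fun i => hA.eigenvalues_pos i
  have hνpos : ∀ j, 0 < ν j := fun j => hB.eigenvalues_pos j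
  set c : Fin n → ℝ := fun i => ((star V * τ * V) i i).re with hcdef
  set d : Fin n → ℝ := fun j => ((star W * τ * W) j j).re with hddef
  have hVpsd : (star V * τ * V).PosSemidef := by
    have := hτ.conjTranspose_mul_mul_same V
    rwa [← Matrix.star_eq_conjTranspose] at this
  have hWpsd : (star W * τ * W).PosSemidef := by
    have := hτ.conjTranspose_mul_mul_same W
    rwa [← Matrix.star_eq_conjTranspose] at this
  have hcsum : ∑ i, c i = 1 := by
    have h1 : (star V * τ * V).trace = 1 := by
      rw [aux_trace_conj_unitary τ V (aux_eigU_mul_star hAH), hτtr]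
    calc ∑ i, c i = ((star V * τ * V).trace).re := by
          rw [Matrix.trace, Complex.re_sum]; rfl
      _ = 1 := by rw [h1]; norm_num
  have hdsum : ∑ j, d j = 1 := by
    have h1 : (star W * τ * W).trace = 1 := by
      rw [aux_trace_conj_unitary τ W (aux_eigU_mul_star hBH), hτtr]
    calc ∑ j, d j = ((star W * τ * W).trace).re := by
          rw [Matrix.trace, Complex.re_sum]; rfl
      _ = 1 := by rw [h1]; norm_num
  -- the traces of τ * matLog
  have hlogA : (τ * matLog A).trace.re = ∑ i, c i * Real.log (μ i) := by
    rw [matLog, dif_pos hAH]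
    exact aux_trace_conj_diag τ V (fun i => Real.log (μ i))
  have hlogB : (τ * matLog B).trace.re = ∑ j, d j * Real.log (ν j) := by
    rw [matLog, dif_pos hBH]
    exact aux_trace_conj_diag τ W (fun j => Real.log (ν j))
  -- the derivative inequality
  have hder : ∀ t : ℝ, 0 ≤ t → (∑ j, d j * (t + ν j)⁻¹) ≤ ∑ i, c i * (t + μ i)⁻¹ := by
    intro t ht
    have hneA : ∀ i, μ i + t ≠ 0 := fun i => by have := hμpos i; positivity
    have hneB : ∀ j, ν j + t ≠ 0 := fun j => by have := hνpos j; positivity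
    have htrA : (τ * (A + (t : ℂ) • (1 : Matrix (Fin n) (Fin n) ℂ))⁻¹).trace.re
        = ∑ i, c i * (t + μ i)⁻¹ := by
      rw [aux_shifted_inv_spectral hAH t hneA,
        aux_trace_conj_diag τ V (fun i => (μ i + t)⁻¹)]
      exact Finset.sum_congr rfl fun i _ => by rw [add_comm (μ i) t]
    have htrB : (τ * (B + (t : ℂ) • (1 : Matrix (Fin n) (Fin n) ℂ))⁻¹).trace.re
        = ∑ j, d j * (t + ν j)⁻¹ := by
      rw [aux_shifted_inv_spectral hBH t hneB,
        aux_trace_conj_diag τ W (fun j => (ν j + t)⁻¹)]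
      exact Finset.sum_congr rfl fun j _ => by rw [add_comm (ν j) t]
    have hsmul : ((t : ℂ) • (1 : Matrix (Fin n) (Fin n) ℂ)).PosSemidef :=
      aux_smul_posSemidef ht Matrix.PosSemidef.one
    have hA' : (A + (t : ℂ) • (1 : Matrix (Fin n) (Fin n) ℂ)).PosDef :=
      hA.add_posSemidef hsmul
    have hB' : (B + (t : ℂ) • (1 : Matrix (Fin n) (Fin n) ℂ)).PosDef :=
      hB.add_posSemidef hsmul
    have hsub : ((B + (t : ℂ) • (1 : Matrix (Fin n) (Fin n) ℂ))
        - (A + (t : ℂ) • (1 : Matrix (Fin n) (Fin n) ℂ))).PosSemidef := by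
      have : (B + (t : ℂ) • (1 : Matrix (Fin n) (Fin n) ℂ))
          - (A + (t : ℂ) • (1 : Matrix (Fin n) (Fin n) ℂ)) = B - A := by abel
      rw [this]; exact hBA
    have hinv := aux_inv_sub_inv_posSemidef hA' hB' hsub
    have hpos := aux_trace_mul_posSemidef_nonneg hτ hinv
    rw [Matrix.mul_sub, Matrix.trace_sub, Complex.sub_re] at hpos
    rw [← htrA, ← htrB]
    linarith
  have hkey := aux_key_analysis c d μ ν hμpos hνpos (by rw [hcsum, hdsum]) hder
  rw [hlogA, hlogB]
  linarith
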